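/- For every λ ∈ (0,1] and every q ∈ (0,1/2], the function p ↦ λ·KL(p‖q) + H(p) is monotone nondecreasing on [0,1/2]; consequently Q_λ(q) = inf_{p∈[0,1/2]} (λ·KL(p‖q) + H(p)) = -λ·log₂(1-q), with the infimum attained at p = 0. -/

import Mathlib

open MeasureTheory Filter

noncomputable def binEnt (p : ℝ) : ℝ :=
  -(p * Real.logb 2 p) - (1 - p) * Real.logb 2 (1 - p)

noncomputable def klBin (a b : ℝ) : ℝ :=
  a * Real.logb 2 (a / b) + (1 - a) * Real.logb 2 ((1 - a) / (1 - b))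

theorem Qlam_eq_of_small_lambda
    (lam : ℝ) (h0 : 0 < lam) (h1 : lam ≤ 1)
    (q : ℝ) (hq0 : 0 < q) (hq : q ≤ 1 / 2) :
    MonotoneOn (fun p => lam * klBin p q + binEnt p) (Set.Icc 0 (1 / 2)) ∧
    sInf ((fun p => lam * klBin p q + binEnt p) '' Set.Icc 0 (1 / 2))
      = -(lam * Real.logb 2 (1 - q)) ∧
    lam * klBin 0 q + binEnt 0 = -(lam * Real.logb 2 (1 - q)) := by
  have hlog2 : (0:ℝ) < Real.log 2 := Real.log_pos (by norm_num)
  have hq1 : q < 1 := by linarith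
  set F : ℝ → ℝ := fun p =>
    ((lam - 1) * (p * Real.log p + (1 - p) * Real.log (1 - p))
      - lam * (p * Real.log q + (1 - p) * Real.log (1 - q))) / Real.log 2 with hF
  have heq : ∀ p ∈ Set.Icc (0:ℝ) (1/2), lam * klBin p q + binEnt p = F p := by
    intro p hp
    obtain ⟨hp0, hp1⟩ := hp
    have h1p : (0:ℝ) < 1 - p := by linarith
    have hd1 : p * Real.log (p / q) = p * Real.log p - p * Real.log q := by
      rcases eq_or_lt_of_le hp0 with h | h
      · simp [← h]
      · rw [Real.log_div (ne_of_gt h) (ne_of_gt hq0)]; ring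
    have hd2 : Real.log ((1 - p) / (1 - q)) = Real.log (1 - p) - Real.log (1 - q) :=
      Real.log_div (ne_of_gt h1p) (by linarith)
    simp only [klBin, binEnt, Real.logb, hF, hd2]
    rw [show p * (Real.log (p / q) / Real.log 2) = (p * Real.log (p / q)) / Real.log 2 from by
      ring, hd1]
    field_simp
    ring
  have hFc : Continuous F := by
    apply Continuous.div_const
    apply Continuous.sub
    · exact continuous_const.mul (Real.continuous_mul_log.add
        (Real.continuous_mul_log.comp (continuous_const.sub continuous_id)))
    · exact continuous_const.mul ((continuous_id.mul continuous_const).add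
        ((continuous_const.sub continuous_id).mul continuous_const))
  have hderiv : ∀ x ∈ interior (Set.Icc (0:ℝ) (1/2)),
      HasDerivAt F (((lam - 1) * (Real.log x - Real.log (1 - x))
        - lam * (Real.log q - Real.log (1 - q))) / Real.log 2) x := by
    rw [interior_Icc]
    intro x hx
    have hx0 : x ≠ 0 := ne_of_gt hx.1
    have hx1 : (1:ℝ) - x ≠ 0 := by have := hx.2; intro h; linarith
    have h1 : HasDerivAt (fun p : ℝ => p * Real.log p) (Real.log x + 1) x :=
      Real.hasDerivAt_mul_log hx0
    have h2 : HasDerivAt (fun p : ℝ => (1 - p) * Real.log (1 - p))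
        ((Real.log (1 - x) + 1) * (-1)) x := by
      exact (Real.hasDerivAt_mul_log hx1).comp x ((hasDerivAt_id x).const_sub 1)
    have h3 : HasDerivAt (fun p : ℝ => p * Real.log q) (Real.log q) x := by
      simpa using (hasDerivAt_id x).mul_const (Real.log q)
    have h4 : HasDerivAt (fun p : ℝ => (1 - p) * Real.log (1 - q))
        (-1 * Real.log (1 - q)) x := by
      exact ((hasDerivAt_id x).const_sub 1).mul_const (Real.log (1 - q))
    have := (((h1.add h2).const_mul (lam - 1)).sub ((h3.add h4).const_mul lam)).div_const
      (Real.log 2)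
    exact this.congr_deriv (by ring)
  have hmono : MonotoneOn F (Set.Icc (0:ℝ) (1/2)) := by
    apply monotoneOn_of_deriv_nonneg (convex_Icc _ _) hFc.continuousOn
    · intro x hx
      exact (hderiv x hx).differentiableAt.differentiableWithinAt
    · intro x hx
      rw [(hderiv x hx).deriv]
      apply div_nonneg _ hlog2.le
      rw [interior_Icc] at hx
      have hlx : Real.log x ≤ Real.log (1 - x) :=
        Real.log_le_log hx.1 (by linarith [hx.2])
      have hlq : Real.log q ≤ Real.log (1 - q) :=
        Real.log_le_log hq0 (by linarith)
      nlinarith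
  have hmono' : MonotoneOn (fun p => lam * klBin p q + binEnt p) (Set.Icc 0 (1/2)) := by
    intro a ha b hb hab
    simp only
    rw [heq a ha, heq b hb]
    exact hmono ha hb hab
  have hf0 : lam * klBin 0 q + binEnt 0 = -(lam * Real.logb 2 (1 - q)) := by
    simp [klBin, binEnt, Real.logb, one_div, Real.log_inv]
    ring
  refine ⟨hmono', ?_, hf0⟩
  have hls : IsLeast ((fun p => lam * klBin p q + binEnt p) '' Set.Icc 0 (1/2))
      (-(lam * Real.logb 2 (1 - q))) := by
    constructor
    · exact ⟨0, ⟨le_refl 0, by norm_num⟩, hf0⟩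
    · rintro y ⟨p, hp, rfl⟩
      rw [← hf0]
      exact hmono' ⟨le_refl 0, by norm_num⟩ hp hp.1
  exact hls.csInf_eq
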